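/- Let g : {0,1}^n → ℝ and define the deletion AUC' = Σ_{j=0}^{n} g(e_{(n-j+1):n}), i.e., switching variables in the order n, n-1, ..., 1. Then AUC' = Σ_{u ⊆ {1,...,n}} ⌊u⌋ · Δ_u, where Δ_u = Σ_{v ⊆ u} (−1)^{|u|−|v|} g(e_v), ⌊u⌋ = min u with ⌊∅⌋ = n+1. -/
import Mathlib


open Finset

/-- The anchored interaction `Δ_u = Σ_{v ⊆ u} (−1)^{|u|−|v|} g(e_v)`, where
points of `{0,1}^n` are identified with subsets of `Fin n`. -/
noncomputable def interaction {n : ℕ} (g : Finset (Fin n) → ℝ)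
    (u : Finset (Fin n)) : ℝ :=
  ∑ v ∈ u.powerset, (-1 : ℝ) ^ (u.card - v.card) * g v

/-- `⌊u⌋`: the minimum of `u` viewed as a subset of `{1,...,n}` (coordinate
`i : Fin n` corresponds to variable `i+1`), with `⌊∅⌋ = n+1`. -/
noncomputable def floorSet {n : ℕ} (u : Finset (Fin n)) : ℕ :=
  if h : u.Nonempty then (u.min' h).val + 1 else n + 1

/-- Möbius inversion: summing interactions over all subsets of `v` recovers `g v`. -/
lemma sum_interaction_powerset {n : ℕ} (g : Finset (Fin n) → ℝ) (v : Finset (Fin n)) :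
    ∑ u ∈ v.powerset, interaction g u = g v := by
  have hpow : ∀ s : Finset (Fin n), s.powerset = univ.filter (· ⊆ s) := by
    intro s; ext t; simp
  calc ∑ u ∈ v.powerset, interaction g u
      = ∑ u : Finset (Fin n), ∑ w : Finset (Fin n),
          if u ⊆ v ∧ w ⊆ u then (-1 : ℝ) ^ (u.card - w.card) * g w else 0 := by
        rw [hpow, sum_filter]
        refine sum_congr rfl fun u _ => ?_
        by_cases h : u ⊆ v
        · simp only [h, true_and, if_true]
          rw [interaction, hpow, sum_filter]
        · simp [h]
    _ = ∑ w : Finset (Fin n), ∑ u : Finset (Fin n),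
          if u ⊆ v ∧ w ⊆ u then (-1 : ℝ) ^ (u.card - w.card) * g w else 0 :=
        Finset.sum_comm
    _ = ∑ w : Finset (Fin n),
          (if w ⊆ v then (∑ t ∈ (v \ w).powerset, (-1 : ℝ) ^ t.card) * g w else 0) := by
        refine sum_congr rfl fun w _ => ?_
        by_cases hw : w ⊆ v
        · rw [if_pos hw, sum_mul, ← Finset.sum_filter]
          refine (Finset.sum_nbij' (fun t => w ∪ t) (fun u => u \ w) ?_ ?_ ?_ ?_ ?_).symm
          · intro t ht
            simp only [mem_powerset] at ht
            simp only [mem_filter, mem_univ, true_and]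
            exact ⟨union_subset hw (ht.trans sdiff_subset), subset_union_left⟩
          · intro u hu
            simp only [mem_filter, mem_univ, true_and] at hu
            simp only [mem_powerset]
            exact sdiff_subset_sdiff hu.1 le_rfl
          · intro t ht
            simp only [mem_powerset] at ht
            exact union_sdiff_cancel_left (disjoint_sdiff.mono_right ht)
          · intro u hu
            simp only [mem_filter, mem_univ, true_and] at hu
            exact union_sdiff_of_subset hu.2
          · intro t ht
            simp only [mem_powerset] at ht
            have hd : Disjoint w t := disjoint_sdiff.mono_right ht
            rw [card_union_of_disjoint hd, Nat.add_sub_cancel_left]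
        · rw [if_neg hw]
          refine Finset.sum_eq_zero fun u _ => ?_
          have : ¬ (u ⊆ v ∧ w ⊆ u) := fun h => hw (h.2.trans h.1)
          simp [this]
    _ = g v := by
        have key : ∀ w : Finset (Fin n),
            (if w ⊆ v then (∑ t ∈ (v \ w).powerset, (-1 : ℝ) ^ t.card) * g w else 0)
              = if w = v then g w else 0 := by
          intro w
          have hcast : (∑ t ∈ (v \ w).powerset, (-1 : ℝ) ^ t.card)
              = if v \ w = ∅ then 1 else 0 := by
            have h0 := @sum_powerset_neg_one_pow_card (Fin n) _ (v \ w)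
            calc (∑ t ∈ (v \ w).powerset, (-1 : ℝ) ^ t.card)
                = ((∑ t ∈ (v \ w).powerset, (-1 : ℤ) ^ t.card : ℤ) : ℝ) := by push_cast; rfl
              _ = _ := by rw [h0]; split <;> simp
          by_cases hw : w ⊆ v
          · rw [if_pos hw, hcast]
            by_cases h : w = v
            · simp [h]
            · have hne : v \ w ≠ ∅ := by
                rw [Ne, sdiff_eq_empty_iff_subset]
                exact fun h2 => h (le_antisymm hw h2)
              simp [hne, h]
          · have : w ≠ v := fun h => hw (h ▸ le_rfl)
            simp [hw, this]
        rw [Finset.sum_congr rfl fun w _ => key w, Finset.sum_ite_eq' univ v g]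
        simp

/-- The number of thresholds `j ∈ {0,...,n}` whose suffix set contains `u` is `⌊u⌋`. -/
lemma count_lemma {n : ℕ} (u : Finset (Fin n)) :
    ((Finset.range (n + 1)).filter
      (fun j => u ⊆ univ.filter fun i : Fin n => n - j ≤ i.val)).card = floorSet u := by
  by_cases h : u.Nonempty
  · set m := (u.min' h).val with hm
    have hmn : m < n := (u.min' h).isLt
    have hiff : ∀ j, (u ⊆ univ.filter fun i : Fin n => n - j ≤ i.val) ↔ n - m ≤ j := by
      intro j
      constructor
      · intro hs
        have := hs (u.min'_mem h)
        simp only [mem_filter, mem_univ, true_and] at this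
        omega
      · intro hj i hi
        simp only [mem_filter, mem_univ, true_and]
        have : u.min' h ≤ i := u.min'_le i hi
        have : m ≤ i.val := this
        omega
    have : ((Finset.range (n + 1)).filter
        (fun j => u ⊆ univ.filter fun i : Fin n => n - j ≤ i.val))
        = (Finset.range (n + 1)).filter (fun j => n - m ≤ j) := by
      exact filter_congr fun j _ => by simpa using hiff j
    rw [this, Finset.range_eq_Ico, Finset.Ico_filter_le, Nat.card_Ico]
    simp only [floorSet, dif_pos h, ← hm]
    omega
  · have : ∀ j, (u ⊆ univ.filter fun i : Fin n => n - j ≤ i.val) := by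
      intro j
      rw [not_nonempty_iff_eq_empty] at h
      simp [h]
    simp only [floorSet, dif_neg h]
    rw [Finset.filter_true_of_mem fun j _ => this j, Finset.card_range]

/-- Deletion AUC: `AUC' = Σ_{j=0}^{n} g(e_{(n-j+1):n}) = Σ_u ⌊u⌋ Δ_u`,
where `e_{(n-j+1):n}` is the indicator of the last `j` coordinates. -/
theorem deletion_auc_eq_sum_interactions {n : ℕ} (g : Finset (Fin n) → ℝ) :
    ∑ j ∈ Finset.range (n + 1), g (univ.filter fun i : Fin n => n - j ≤ i.val)
      = ∑ u : Finset (Fin n), ((floorSet u : ℕ) : ℝ) * interaction g u := by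
  have hpow : ∀ s : Finset (Fin n), s.powerset = univ.filter (· ⊆ s) := by
    intro s; ext t; simp
  calc ∑ j ∈ Finset.range (n + 1), g (univ.filter fun i : Fin n => n - j ≤ i.val)
      = ∑ j ∈ Finset.range (n + 1), ∑ u : Finset (Fin n),
          if u ⊆ (univ.filter fun i : Fin n => n - j ≤ i.val)
            then interaction g u else 0 := by
        refine sum_congr rfl fun j _ => ?_
        rw [← sum_filter, ← hpow, sum_interaction_powerset]
    _ = ∑ u : Finset (Fin n), ∑ j ∈ Finset.range (n + 1),
          if u ⊆ (univ.filter fun i : Fin n => n - j ≤ i.val)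
            then interaction g u else 0 := Finset.sum_comm
    _ = ∑ u : Finset (Fin n), ((floorSet u : ℕ) : ℝ) * interaction g u := by
        refine sum_congr rfl fun u _ => ?_
        rw [← Finset.sum_filter, Finset.sum_const, nsmul_eq_mul, count_lemma]
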